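/- Let y be a process such that each y_τ is 𝓕_τ-measurable and integrable, and y_τ = φ_0(τ) + Σ_{m=1}^p φ_m(τ) y_{τ−m} + ε_τ almost surely for every τ ∈ ℤ. Then for every t ∈ ℤ and every integer N ≥ 1, the mean square error of the N-step-ahead predictor is E[(y_t − E[y_t | 𝓕_{t−N}])²] = Σ_{r=0}^{N−1} ξ_{t,r}² σ_{t−r}². -/

import Mathlib

open Finset

/-- The `k × k` solution matrix `Φ_{t,k}`: its (1-based) `(i,j)` entry is `-1` if `i = j-1`,
`φ_{1+i−j}(t−k+i)` if `0 ≤ i−j ≤ p−1`, and `0` otherwise. -/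
noncomputable def PhiMat (p : ℕ) (φ : ℕ → ℤ → ℝ) (t : ℤ) (k : ℕ) :
    Matrix (Fin k) (Fin k) ℝ :=
  fun i j =>
    if (i : ℕ) + 1 = (j : ℕ) then -1
    else if (j : ℕ) ≤ (i : ℕ) ∧ (i : ℕ) - (j : ℕ) + 1 ≤ p then
      φ ((i : ℕ) - (j : ℕ) + 1) (t - (k : ℤ) + (i : ℕ) + 1)
    else 0

/-- The Hessenbergian (Green function) `ξ_{t,k} = det Φ_{t,k}`, with the conventions
`ξ_{t,0} = 1` (empty determinant) and `ξ_{t,k} = 0` for `k < 0`. -/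
noncomputable def xi (p : ℕ) (φ : ℕ → ℤ → ℝ) (t : ℤ) (k : ℤ) : ℝ :=
  if 0 ≤ k then (PhiMat p φ t k.toNat).det else 0

open MeasureTheory Filter

lemma xi_coe (p : ℕ) (φ : ℕ → ℤ → ℝ) (t : ℤ) (k : ℕ) :
    xi p φ t (k : ℤ) = (PhiMat p φ t k).det := by
  simp [xi]

lemma xi_zero (p : ℕ) (φ : ℕ → ℤ → ℝ) (t : ℤ) : xi p φ t 0 = 1 := by
  simp [xi, Matrix.det_fin_zero]

lemma xi_neg (p : ℕ) (φ : ℕ → ℤ → ℝ) (t : ℤ) (k : ℤ) (h : k < 0) : xi p φ t k = 0 := by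
  simp [xi, not_le.2 h]

lemma val_succAbove {n : ℕ} (i : Fin (n+1)) (r : Fin n) :
    ((i.succAbove r : Fin (n+1)) : ℕ) = if (r:ℕ) < (i:ℕ) then (r:ℕ) else (r:ℕ)+1 := by
  rw [Fin.succAbove]
  split_ifs with h1 h2 h2
  · rfl
  · exact absurd h1 (by simpa [Fin.lt_def] using h2)
  · exact absurd (by simpa [Fin.lt_def] using h2) h1
  · rfl

lemma phi_minor_det (p : ℕ) (φ : ℕ → ℤ → ℝ) (t : ℤ) (k : ℕ) (i : Fin (k+1)) :
    ((PhiMat p φ t (k+1)).submatrix i.succAbove Fin.succ).det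
      = (-1)^(i:ℕ) * (PhiMat p φ t (k - (i:ℕ))).det := by
  classical
  have hik : (i:ℕ) ≤ k := Nat.lt_succ_iff.mp i.isLt
  have hsum : (i:ℕ) + (k - (i:ℕ)) = k := Nat.add_sub_cancel' hik
  set M := (PhiMat p φ t (k+1)).submatrix i.succAbove Fin.succ with hM
  let e2 : (Fin (i:ℕ) ⊕ Fin (k - (i:ℕ))) ≃ Fin k := finSumFinEquiv.trans (finCongr hsum)
  have hinl : ∀ (r : Fin (i:ℕ)), ((e2 (Sum.inl r)) : ℕ) = (r:ℕ) := by
    intro r; simp [e2]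
  have hinr : ∀ (r : Fin (k - (i:ℕ))), ((e2 (Sum.inr r)) : ℕ) = (i:ℕ) + (r:ℕ) := by
    intro r; simp [e2]
  rw [← Matrix.det_submatrix_equiv_self e2 M]
  set M2 := M.submatrix e2 e2 with hM2
  have hent : ∀ (a b : Fin k), M a b
      = (if ((i.succAbove a : Fin (k+1)) : ℕ) + 1 = (b:ℕ)+1 then (-1:ℝ)
        else if (b:ℕ)+1 ≤ ((i.succAbove a : Fin (k+1)) : ℕ)
            ∧ ((i.succAbove a : Fin (k+1)) : ℕ) - ((b:ℕ)+1) + 1 ≤ p then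
          φ (((i.succAbove a : Fin (k+1)) : ℕ) - ((b:ℕ)+1) + 1)
            (t - (((k+1 : ℕ)) : ℤ) + (((i.succAbove a : Fin (k+1)) : ℕ) : ℤ) + 1)
        else 0) := by
    intro a b
    rfl
  have h12 : M2.toBlocks₁₂ = 0 := by
    ext r c
    have hr : ((e2 (Sum.inl r)) : ℕ) = (r:ℕ) := hinl r
    have hc : ((e2 (Sum.inr c)) : ℕ) = (i:ℕ) + (c:ℕ) := hinr c
    have hsa : ((i.succAbove (e2 (Sum.inl r)) : Fin (k+1)) : ℕ) = (r:ℕ) := by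
      rw [val_succAbove, hr, if_pos r.isLt]
    simp only [Matrix.toBlocks₁₂, Matrix.of_apply, hM2, Matrix.submatrix_apply]
    rw [hent, hsa, hc]
    have hri := r.isLt
    split_ifs with h1 h2
    · exfalso; omega
    · exfalso; omega
    · rfl
  have h22 : M2.toBlocks₂₂ = PhiMat p φ t (k - (i:ℕ)) := by
    ext r c
    have hr : ((e2 (Sum.inr r)) : ℕ) = (i:ℕ) + (r:ℕ) := hinr r
    have hc : ((e2 (Sum.inr c)) : ℕ) = (i:ℕ) + (c:ℕ) := hinr c
    have hsa : ((i.succAbove (e2 (Sum.inr r)) : Fin (k+1)) : ℕ) = (i:ℕ) + (r:ℕ) + 1 := by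
      rw [val_succAbove, hr, if_neg (by omega)]
    simp only [Matrix.toBlocks₂₂, Matrix.of_apply, hM2, Matrix.submatrix_apply]
    rw [hent, hsa, hc]
    simp only [PhiMat]
    split_ifs with h1 h2 h3 h3 h4 h5 <;>
      first
        | rfl
        | (exfalso; omega)
        | (congr 1 <;> omega)
  have hdet2 : M2.det = (M2.toBlocks₁₁).det * (PhiMat p φ t (k - (i:ℕ))).det := by
    conv_lhs => rw [← Matrix.fromBlocks_toBlocks M2, h12, h22]
    exact Matrix.det_fromBlocks_zero₁₂ _ _ _
  have h11 : (M2.toBlocks₁₁).det = (-1)^(i:ℕ) := by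
    have hgen : ∀ (r c : Fin (i:ℕ)), M2.toBlocks₁₁ r c
        = (if (r:ℕ) = (c:ℕ) then (-1:ℝ) else if (c:ℕ) < (r:ℕ) then M2.toBlocks₁₁ r c else 0) := by
      intro r c
      have hr : ((e2 (Sum.inl r)) : ℕ) = (r:ℕ) := hinl r
      have hc : ((e2 (Sum.inl c)) : ℕ) = (c:ℕ) := hinl c
      have hsa : ((i.succAbove (e2 (Sum.inl r)) : Fin (k+1)) : ℕ) = (r:ℕ) := by
        rw [val_succAbove, hr, if_pos r.isLt]
      by_cases hd : (r:ℕ) = (c:ℕ)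
      · rw [if_pos hd]
        simp only [Matrix.toBlocks₁₁, Matrix.of_apply, hM2, Matrix.submatrix_apply]
        rw [hent, hsa, hc, if_pos (by omega)]
      · rw [if_neg hd]
        by_cases hlt : (c:ℕ) < (r:ℕ)
        · rw [if_pos hlt]
        · rw [if_neg hlt]
          simp only [Matrix.toBlocks₁₁, Matrix.of_apply, hM2, Matrix.submatrix_apply]
          rw [hent, hsa, hc]
          split_ifs with h1 h2
          · exfalso; omega
          · exfalso; omega
          · rfl
    have htri : M2.toBlocks₁₁.BlockTriangular OrderDual.toDual := by
      intro r c hrc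
      have hrc' : (r:ℕ) < (c:ℕ) := hrc
      rw [hgen r c, if_neg (by omega), if_neg (by omega)]
    rw [Matrix.det_of_lowerTriangular _ htri]
    have hdiag : ∀ r : Fin (i:ℕ), M2.toBlocks₁₁ r r = -1 := by
      intro r
      rw [hgen r r, if_pos rfl]
    rw [Finset.prod_congr rfl (fun r _ => hdiag r)]
    simp
  rw [hdet2, h11]

lemma xi_rec (p : ℕ) (φ : ℕ → ℤ → ℝ) (t : ℤ) (k : ℕ) :
    xi p φ t ((k:ℤ)+1) = ∑ m ∈ Icc 1 p, φ m (t - ((k:ℤ)+1) + m) * xi p φ t ((k:ℤ)+1 - m) := by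
  classical
  have hcoe : ((k:ℤ)+1) = ((k+1 : ℕ) : ℤ) := by push_cast; ring
  set T : ℕ → ℝ := fun m => if 1 ≤ m ∧ m ≤ p then φ m (t - ((k:ℤ)+1) + m) * xi p φ t ((k:ℤ)+1 - m) else 0 with hT
  have hTval : ∀ m, 1 ≤ m → m ≤ p → T m = φ m (t - ((k:ℤ)+1) + m) * xi p φ t ((k:ℤ)+1 - m) := by
    intro m h1 h2; simp only [hT]; rw [if_pos ⟨h1, h2⟩]
  have hTzero : ∀ m, ¬(1 ≤ m ∧ m ≤ p) → T m = 0 := by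
    intro m h; simp only [hT]; rw [if_neg h]
  rw [hcoe, xi_coe]
  rw [Matrix.det_succ_column_zero]
  have hterm : ∀ i : Fin (k+1),
      (-1)^(i:ℕ) * (PhiMat p φ t (k+1)) i 0 * ((PhiMat p φ t (k+1)).submatrix i.succAbove Fin.succ).det
        = T ((i:ℕ)+1) := by
    intro i
    rw [phi_minor_det]
    have hik : (i:ℕ) ≤ k := Nat.lt_succ_iff.mp i.isLt
    have hxi : (PhiMat p φ t (k - (i:ℕ))).det = xi p φ t ((k:ℤ)+1 - (((i:ℕ):ℤ)+1)) := by
      have h' : ((k:ℤ)+1 - (((i:ℕ):ℤ)+1)) = ((k - (i:ℕ) : ℕ) : ℤ) := by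
        push_cast [Nat.cast_sub hik]; ring
      rw [h', xi_coe]
    have hA : (PhiMat p φ t (k+1)) i 0
        = if (i:ℕ)+1 ≤ p then φ ((i:ℕ)+1) (t - ((k:ℤ)+1) + (((i:ℕ)+1 : ℕ) : ℤ)) else 0 := by
      have e1 : (i:ℕ) - 0 + 1 = (i:ℕ)+1 := by omega
      have e2 : t - ((k+1:ℕ):ℤ) + ((i:ℕ):ℤ) + 1 = t - ((k:ℤ)+1) + (((i:ℕ)+1 : ℕ) : ℤ) := by
        push_cast; ring
      simp only [PhiMat, Fin.val_zero, e1, e2]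
      rw [if_neg (show ¬((i:ℕ) + 1 = 0) by omega)]
      simp [Nat.zero_le]
    rw [hA]
    by_cases h : (i:ℕ)+1 ≤ p
    · rw [if_pos h, hTval _ (by omega) h]
      have hsign : ((-1:ℝ))^(i:ℕ) * (-1)^(i:ℕ) = 1 := by
        rw [← pow_add, ← two_mul, pow_mul]; norm_num
      calc (-1:ℝ)^(i:ℕ) * φ ((i:ℕ)+1) (t - ((k:ℤ)+1) + (((i:ℕ)+1 : ℕ) : ℤ))
            * ((-1:ℝ)^(i:ℕ) * (PhiMat p φ t (k - (i:ℕ))).det)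
          = ((-1:ℝ)^(i:ℕ) * (-1)^(i:ℕ)) * (φ ((i:ℕ)+1) (t - ((k:ℤ)+1) + (((i:ℕ)+1 : ℕ) : ℤ))
            * (PhiMat p φ t (k - (i:ℕ))).det) := by ring
        _ = φ ((i:ℕ)+1) (t - ((k:ℤ)+1) + (((i:ℕ)+1 : ℕ) : ℤ)) * (PhiMat p φ t (k - (i:ℕ))).det := by
            rw [hsign, one_mul]
        _ = φ ((i:ℕ)+1) (t - ((k:ℤ)+1) + (((i:ℕ)+1 : ℕ) : ℤ)) * xi p φ t ((k:ℤ)+1 - (((i:ℕ):ℤ)+1)) := by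
            rw [hxi]
        _ = φ ((i:ℕ)+1) (t - ((k:ℤ)+1) + (((i:ℕ)+1 : ℕ):ℤ)) * xi p φ t ((k:ℤ)+1 - (((i:ℕ)+1 : ℕ) : ℤ)) := by
            norm_cast
    · rw [if_neg h, hTzero _ (by omega)]
      ring
  rw [Finset.sum_congr rfl (fun i _ => hterm i)]
  rw [Fin.sum_univ_eq_sum_range (fun i => T (i+1)) (k+1)]
  have hTzero_big : ∀ m, k+1 < m → T m = 0 := by
    intro m hm
    by_cases h : 1 ≤ m ∧ m ≤ p
    · rw [hTval m h.1 h.2]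
      have : xi p φ t ((k:ℤ)+1 - m) = 0 := xi_neg _ _ _ _ (by push_cast; omega)
      rw [this, mul_zero]
    · exact hTzero m h
  have hL : ∑ i ∈ Finset.range (k+1), T (i+1) = ∑ m ∈ Finset.range (k+2), T m := by
    rw [Finset.sum_range_succ' T (k+1)]
    rw [hTzero 0 (by omega), add_zero]
  rw [hL]
  have hR : ∑ m ∈ Icc 1 p, φ m (t - ((k+1:ℕ):ℤ) + m) * xi p φ t (((k+1:ℕ):ℤ) - m) = ∑ m ∈ Icc 1 p, T m := by
    refine Finset.sum_congr rfl (fun m hm => ?_)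
    simp only [mem_Icc] at hm
    rw [hTval m hm.1 hm.2]
    push_cast
    ring_nf
  rw [hR]
  have h1 : ∑ m ∈ Finset.range (k+2), T m = ∑ m ∈ Finset.range (max (k+2) (p+1)), T m := by
    refine Finset.sum_subset (by intro x hx; simp at hx ⊢; omega) ?_
    intro x hx hnx
    simp at hx hnx
    exact hTzero_big x (by omega)
  have h2 : ∑ m ∈ Icc 1 p, T m = ∑ m ∈ Finset.range (max (k+2) (p+1)), T m := by
    refine Finset.sum_subset (by intro x hx; simp at hx ⊢; omega) ?_
    intro x hx hnx
    simp at hx hnx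
    exact hTzero x (by omega)
  rw [h1, h2]


noncomputable def cfun (p : ℕ) (φ : ℕ → ℤ → ℝ) (t : ℤ) (N : ℕ) (j : ℕ) : ℝ :=
  ∑ m ∈ Finset.Icc j p, φ m (t - (N:ℤ) + 1 + (m:ℤ) - (j:ℤ)) * xi p φ t ((N:ℤ) - 1 - (m:ℤ) + (j:ℤ))

lemma cfun_one (p : ℕ) (φ : ℕ → ℤ → ℝ) (t : ℤ) (j : ℕ) (hj1 : 1 ≤ j) (hjp : j ≤ p) :
    cfun p φ t 1 j = φ j t := by
  unfold cfun
  rw [Finset.sum_eq_single_of_mem j (by simp [hjp])]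
  · have h1 : t - ((1:ℕ):ℤ) + 1 + (j:ℤ) - (j:ℤ) = t := by push_cast; ring
    have h2 : ((1:ℕ):ℤ) - 1 - (j:ℤ) + (j:ℤ) = 0 := by push_cast; ring
    rw [h1, h2, xi_zero, mul_one]
  · intro b hb hbj
    simp only [Finset.mem_Icc] at hb
    have : xi p φ t (((1:ℕ):ℤ) - 1 - (b:ℤ) + (j:ℤ)) = 0 := by
      apply xi_neg
      push_cast
      omega
    rw [this, mul_zero]

lemma cfun_succ (p : ℕ) (φ : ℕ → ℤ → ℝ) (t : ℤ) (N : ℕ) (j : ℕ) (hj1 : 1 ≤ j) (hjp : j ≤ p) :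
    cfun p φ t (N+1) j = xi p φ t (N:ℤ) * φ j (t - (N:ℤ)) + cfun p φ t N (j+1) := by
  unfold cfun
  rw [← Finset.sum_erase_add (Finset.Icc j p) _ (Finset.mem_Icc.mpr ⟨le_refl j, hjp⟩)]
  rw [Finset.Icc_erase_left]
  have hterm : φ j (t - ((N+1:ℕ):ℤ) + 1 + (j:ℤ) - (j:ℤ)) * xi p φ t (((N+1:ℕ):ℤ) - 1 - (j:ℤ) + (j:ℤ))
      = xi p φ t (N:ℤ) * φ j (t - (N:ℤ)) := by
    have h1 : t - ((N+1:ℕ):ℤ) + 1 + (j:ℤ) - (j:ℤ) = t - (N:ℤ) := by push_cast; ring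
    have h2 : ((N+1:ℕ):ℤ) - 1 - (j:ℤ) + (j:ℤ) = (N:ℤ) := by push_cast; ring
    rw [h1, h2, mul_comm]
  rw [hterm]
  have hrest : ∑ m ∈ Finset.Ioc j p, φ m (t - ((N+1:ℕ):ℤ) + 1 + (m:ℤ) - (j:ℤ)) * xi p φ t (((N+1:ℕ):ℤ) - 1 - (m:ℤ) + (j:ℤ))
      = ∑ m ∈ Finset.Icc (j+1) p, φ m (t - (N:ℤ) + 1 + (m:ℤ) - ((j+1:ℕ):ℤ)) * xi p φ t ((N:ℤ) - 1 - (m:ℤ) + ((j+1:ℕ):ℤ)) := by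
    rw [← Finset.Icc_add_one_left_eq_Ioc]
    refine Finset.sum_congr rfl (fun m hm => ?_)
    have h1 : t - ((N+1:ℕ):ℤ) + 1 + (m:ℤ) - (j:ℤ) = t - (N:ℤ) + 1 + (m:ℤ) - ((j+1:ℕ):ℤ) := by
      push_cast; ring
    have h2 : ((N+1:ℕ):ℤ) - 1 - (m:ℤ) + (j:ℤ) = (N:ℤ) - 1 - (m:ℤ) + ((j+1:ℕ):ℤ) := by
      push_cast; ring
    rw [h1, h2]
  rw [hrest]
  ring

lemma cfun_first (p : ℕ) (φ : ℕ → ℤ → ℝ) (t : ℤ) (N : ℕ) (hN : 1 ≤ N) :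
    cfun p φ t N 1 = xi p φ t (N:ℤ) := by
  obtain ⟨k, rfl⟩ : ∃ k, N = k+1 := ⟨N-1, by omega⟩
  unfold cfun
  have : ((k+1:ℕ):ℤ) = (k:ℤ)+1 := by push_cast; ring
  rw [this, xi_rec p φ t k]
  refine Finset.sum_congr rfl (fun m hm => ?_)
  have h1 : t - ((k:ℤ)+1) + 1 + (m:ℤ) - ((1:ℕ):ℤ) = t - ((k:ℤ)+1) + (m:ℤ) := by push_cast; ring
  have h2 : ((k:ℤ)+1) - 1 - (m:ℤ) + ((1:ℕ):ℤ) = (k:ℤ)+1 - (m:ℤ) := by push_cast; ring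
  rw [h1, h2]

lemma cfun_topzero (p : ℕ) (φ : ℕ → ℤ → ℝ) (t : ℤ) (N : ℕ) :
    cfun p φ t N (p+1) = 0 := by
  unfold cfun
  rw [Finset.Icc_eq_empty (by omega), Finset.sum_empty]


/-- The mean square error of the `N`-step-ahead predictor of a PAR(`p`) process. -/
theorem par_mean_square_error
    (p : ℕ) (hp : 1 ≤ p) (φ : ℕ → ℤ → ℝ)
    {Ω : Type*} {m0 : MeasurableSpace Ω} {μ : Measure Ω} [IsProbabilityMeasure μ]
    (𝓕 : Filtration ℤ m0)
    (ε : ℤ → Ω → ℝ)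
    (hεmeas : ∀ τ : ℤ, StronglyMeasurable[𝓕 τ] (ε τ))
    (hεL2 : ∀ τ : ℤ, MemLp (ε τ) 2 μ)
    (hεmart : ∀ τ : ℤ, μ[ε τ | 𝓕 (τ - 1)] =ᵐ[μ] 0)
    (y : ℤ → Ω → ℝ)
    (hymeas : ∀ τ : ℤ, StronglyMeasurable[𝓕 τ] (y τ))
    (hyint : ∀ τ : ℤ, Integrable (y τ) μ)
    (hy : ∀ τ : ℤ, y τ =ᵐ[μ] fun ω =>
      φ 0 τ + (∑ m ∈ Finset.Icc 1 p, φ m τ * y (τ - m) ω) + ε τ ω)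
    (t : ℤ) (N : ℕ) (hN : 1 ≤ N) :
    ∫ ω, (y t ω - (μ[y t | 𝓕 (t - N)]) ω) ^ 2 ∂μ
      = ∑ r ∈ Finset.range N,
          (xi p φ t r) ^ 2 * ∫ ω, (ε (t - r) ω) ^ 2 ∂μ := by
  classical
  have hεint : ∀ τ : ℤ, Integrable (ε τ) μ := fun τ => (hεL2 τ).integrable one_le_two
  -- conditional expectation of ε at earlier times is zero
  have hεcond : ∀ (τ s : ℤ), s ≤ τ - 1 → μ[ε τ | 𝓕 s] =ᵐ[μ] 0 := by
    intro τ s hs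
    have h1 : μ[μ[ε τ | 𝓕 (τ-1)] | 𝓕 s] =ᵐ[μ] μ[ε τ | 𝓕 s] :=
      condExp_condExp_of_le (𝓕.mono hs) (𝓕.le (τ-1))
    have h2 : μ[μ[ε τ | 𝓕 (τ-1)] | 𝓕 s] =ᵐ[μ] μ[(0 : Ω → ℝ) | 𝓕 s] := condExp_congr_ae (hεmart τ)
    refine h1.symm.trans (h2.trans ?_)
    rw [condExp_zero]
  -- products of ε's are integrable
  have hprod : ∀ a b : ℤ, Integrable (fun ω => ε a ω * ε b ω) μ := by
    intro a b
    have hpqr : (1:ENNReal)/1 = 1/2 + 1/2 := by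
      rw [ENNReal.div_add_div_same, one_div_one]
      norm_num
      rw [ENNReal.div_self (by norm_num) (by norm_num)]
    have h : MemLp (ε a • ε b) 1 μ := (hεL2 b).smul (hεL2 a)
    have h2 := h.integrable le_rfl
    exact h2
  -- orthogonality
  have horth : ∀ a b : ℤ, a < b → ∫ ω, ε a ω * ε b ω ∂μ = 0 := by
    intro a b hab
    have hab' : a ≤ b - 1 := by omega
    have hml : μ[(fun ω => ε a ω * ε b ω) | 𝓕 (b-1)] =ᵐ[μ] fun ω => ε a ω * (μ[ε b | 𝓕 (b-1)]) ω := by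
      have hmul := condExp_mul_of_stronglyMeasurable_left ((hεmeas a).mono (𝓕.mono hab'))
        (hprod a b) (hεint b)
      exact hmul
    have hzero : μ[(fun ω => ε a ω * ε b ω) | 𝓕 (b-1)] =ᵐ[μ] 0 := by
      refine hml.trans ?_
      filter_upwards [hεcond b (b-1) le_rfl] with ω hω
      simp [hω]
    calc ∫ ω, ε a ω * ε b ω ∂μ = ∫ ω, (μ[(fun ω => ε a ω * ε b ω) | 𝓕 (b-1)]) ω ∂μ :=
          (integral_condExp (𝓕.le (b-1))).symm
      _ = 0 := by rw [integral_congr_ae hzero]; simp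
  -- key decomposition of y t
  have hkey : ∀ n : ℕ, 1 ≤ n → y t =ᵐ[μ] fun ω =>
      ((∑ r ∈ Finset.range n, xi p φ t r * φ 0 (t - r))
        + ∑ j ∈ Finset.Icc 1 p, cfun p φ t n j * y (t - n + 1 - j) ω)
      + ∑ r ∈ Finset.range n, xi p φ t r * ε (t - r) ω := by
    intro n hn
    induction n, hn using Nat.le_induction with
    | base =>
      filter_upwards [hy t] with ω hω
      rw [hω]
      simp only [Finset.sum_range_one, Nat.cast_zero, xi_zero, one_mul, sub_zero, Nat.cast_one]
      have hsum : ∑ j ∈ Finset.Icc 1 p, cfun p φ t 1 j * y (t - 1 + 1 - j) ω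
          = ∑ j ∈ Finset.Icc 1 p, φ j t * y (t - j) ω := by
        refine Finset.sum_congr rfl (fun j hj => ?_)
        simp only [Finset.mem_Icc] at hj
        rw [cfun_one p φ t j hj.1 hj.2]
        congr 2
        ring
      rw [hsum]
    | succ n hn ih =>
      filter_upwards [ih, hy (t - n)] with ω hω hω2
      rw [hω]
      -- split off j = 1 from the S-sum at level n
      have hsplit : ∑ j ∈ Finset.Icc 1 p, cfun p φ t n j * y (t - n + 1 - j) ω
          = xi p φ t n * y (t - n) ω
            + ∑ j ∈ Finset.Ioc 1 p, cfun p φ t n j * y (t - n + 1 - j) ω := by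
        rw [← Finset.Ioc_insert_left hp, Finset.sum_insert (by simp)]
        rw [cfun_first p φ t n hn]
        congr 3
        ring
      -- the S-sum at level n+1
      have hSsucc : ∑ j ∈ Finset.Icc 1 p, cfun p φ t (n+1) j * y (t - (n+1:ℕ) + 1 - j) ω
          = xi p φ t n * (∑ m ∈ Finset.Icc 1 p, φ m (t - n) * y (t - n - m) ω)
            + ∑ j ∈ Finset.Ioc 1 p, cfun p φ t n j * y (t - n + 1 - j) ω := by
        have h1 : ∑ j ∈ Finset.Icc 1 p, cfun p φ t (n+1) j * y (t - (n+1:ℕ) + 1 - j) ω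
            = ∑ j ∈ Finset.Icc 1 p, (xi p φ t n * (φ j (t - n) * y (t - n - j) ω)
                + cfun p φ t n (j+1) * y (t - n - j) ω) := by
          refine Finset.sum_congr rfl (fun j hj => ?_)
          simp only [Finset.mem_Icc] at hj
          rw [cfun_succ p φ t n j hj.1 hj.2]
          have harg : t - ((n+1:ℕ):ℤ) + 1 - (j:ℤ) = t - (n:ℤ) - (j:ℤ) := by push_cast; ring
          rw [harg]
          ring
        have h2 : ∑ j ∈ Finset.Icc 1 p, cfun p φ t n (j+1) * y (t - n - j) ω
            = ∑ j ∈ Finset.Icc 2 (p+1), cfun p φ t n j * y (t - n + 1 - j) ω := by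
          rw [show Finset.Icc 2 (p+1) = (Finset.Icc 1 p).map (addRightEmbedding 1) by
            rw [Finset.map_add_right_Icc]]
          rw [Finset.sum_map]
          refine Finset.sum_congr rfl (fun j hj => ?_)
          simp only [addRightEmbedding_apply]
          congr 2
          push_cast
          ring
        have h3 : ∑ j ∈ Finset.Icc 2 (p+1), cfun p φ t n j * y (t - n + 1 - j) ω
            = ∑ j ∈ Finset.Ioc 1 p, cfun p φ t n j * y (t - n + 1 - j) ω := by
          rw [Finset.sum_Icc_succ_top (by omega : 2 ≤ p+1), cfun_topzero, zero_mul, add_zero,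
            ← Finset.Icc_add_one_left_eq_Ioc]
          rfl
        rw [h1, Finset.sum_add_distrib, ← Finset.mul_sum, h2, h3]
      -- A and E recurrences
      rw [Finset.sum_range_succ (fun r => xi p φ t r * φ 0 (t - r)) n,
        Finset.sum_range_succ (fun r => xi p φ t r * ε (t - r) ω) n,
        hSsucc, hsplit, hω2]
      ring
  -- the function parts
  set G : Ω → ℝ := fun ω => (∑ r ∈ Finset.range N, xi p φ t r * φ 0 (t - r))
      + ∑ j ∈ Finset.Icc 1 p, cfun p φ t N j * y (t - N + 1 - j) ω with hG
  set EN : Ω → ℝ := fun ω => ∑ r ∈ Finset.range N, xi p φ t r * ε (t - r) ω with hEN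
  have hGmeas : StronglyMeasurable[𝓕 (t - N)] G := by
    refine stronglyMeasurable_const.add ?_
    refine Finset.stronglyMeasurable_fun_sum _ (fun j hj => ?_)
    simp only [Finset.mem_Icc] at hj
    exact stronglyMeasurable_const.mul ((hymeas _).mono (𝓕.mono (by omega)))
  have hGint : Integrable G μ := by
    refine (integrable_const _).add ?_
    exact integrable_finset_sum _ (fun j hj => (hyint _).const_mul _)
  have hENint : Integrable EN μ := by
    refine integrable_finset_sum _ (fun r hr => (hεint _).const_mul _)
  have hsum_eq : (fun ω => G ω + EN ω) = G + EN := rfl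
  have hyGE : y t =ᵐ[μ] G + EN := by
    refine (hkey N hN).trans (Eventually.of_forall (fun ω => ?_))
    simp [hG, hEN]
  -- conditional expectation of y t
  have hcond : μ[y t | 𝓕 (t - N)] =ᵐ[μ] G := by
    have h1 : μ[y t | 𝓕 (t - N)] =ᵐ[μ] μ[G + EN | 𝓕 (t - N)] := condExp_congr_ae hyGE
    have h2 : μ[G + EN | 𝓕 (t - N)] =ᵐ[μ] μ[G | 𝓕 (t - N)] + μ[EN | 𝓕 (t - N)] :=
      condExp_add hGint hENint _
    have h3 : μ[G | 𝓕 (t - N)] = G := condExp_of_stronglyMeasurable (𝓕.le _) hGmeas hGint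
    have h4 : μ[EN | 𝓕 (t - N)] =ᵐ[μ] 0 := by
      have hENsum : EN = ∑ r ∈ Finset.range N, (xi p φ t r) • ε (t - r) := by
        funext ω
        simp [hEN, Finset.sum_apply]
      rw [hENsum]
      have h5 : μ[∑ r ∈ Finset.range N, (xi p φ t r) • ε (t - r) | 𝓕 (t - N)]
          =ᵐ[μ] ∑ r ∈ Finset.range N, μ[(xi p φ t r) • ε (t - r) | 𝓕 (t - N)] :=
        condExp_finsetSum (fun (r : ℕ) _ => (hεint (t - r)).smul (xi p φ t r)) _
      refine h5.trans ?_
      have h6 : ∀ r ∈ Finset.range N, μ[(xi p φ t r) • ε (t - r) | 𝓕 (t - N)] =ᵐ[μ] 0 := by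
        intro r hr
        simp only [Finset.mem_range] at hr
        have h7 : μ[(xi p φ t r) • ε (t - r) | 𝓕 (t - N)]
            =ᵐ[μ] (xi p φ t r) • μ[ε (t - r) | 𝓕 (t - N)] := condExp_smul _ _ _
        refine h7.trans ?_
        filter_upwards [hεcond (t - r) (t - N) (by omega)] with ω hω
        simp [hω]
      calc ∑ r ∈ Finset.range N, μ[(xi p φ t r) • ε (t - r) | 𝓕 (t - N)]
          =ᵐ[μ] ∑ r ∈ Finset.range N, (0 : Ω → ℝ) := eventuallyEq_sum (fun r hr => h6 r hr)
        _ = 0 := by simp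
    refine h1.trans (h2.trans ?_)
    rw [h3]
    refine (h4.mono (fun ω hω => ?_))
    simp only [Pi.add_apply, hω, Pi.zero_apply, add_zero]
  -- difference equals EN a.e.
  have hdiff : (fun ω => (y t ω - (μ[y t | 𝓕 (t - N)]) ω)^2) =ᵐ[μ] fun ω => (EN ω)^2 := by
    filter_upwards [hyGE, hcond] with ω h1 h2
    have : y t ω = G ω + EN ω := h1
    rw [this, h2]
    ring
  rw [integral_congr_ae hdiff]
  -- expand the square
  have hsq : ∀ ω, (EN ω)^2 = ∑ r ∈ Finset.range N, ∑ s ∈ Finset.range N,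
      (xi p φ t r * xi p φ t s) * (ε (t - r) ω * ε (t - s) ω) := by
    intro ω
    simp only [hEN, sq]
    rw [Finset.sum_mul_sum]
    exact Finset.sum_congr rfl (fun r _ => Finset.sum_congr rfl (fun s _ => by ring))
  simp only [hsq]
  rw [integral_finset_sum (Finset.range N)
    (f := fun r (ω : Ω) => ∑ s ∈ Finset.range N,
      (xi p φ t r * xi p φ t s) * (ε (t - r) ω * ε (t - s) ω))
    (fun r _ => integrable_finset_sum _
      (fun s _ => ((hprod (t - r) (t - s)).const_mul _)))]
  refine Finset.sum_congr rfl (fun r hr => ?_)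
  rw [integral_finset_sum (Finset.range N)
    (f := fun s (ω : Ω) => (xi p φ t r * xi p φ t s) * (ε (t - r) ω * ε (t - s) ω))
    (fun s _ => ((hprod (t - r) (t - s)).const_mul _))]
  rw [Finset.sum_eq_single_of_mem r hr]
  · rw [integral_const_mul]
    congr 1
    · rw [sq]
    · exact integral_congr_ae (Eventually.of_forall (fun ω => (sq (ε (t - r) ω)).symm))
  · intro s hs hsr
    rw [integral_const_mul]
    have : ∫ ω, ε (t - r) ω * ε (t - s) ω ∂μ = 0 := by
      rcases lt_or_gt_of_ne (show (t - r : ℤ) ≠ (t - s) by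
        intro h; apply hsr; omega) with h | h
      · exact horth _ _ h
      · rw [integral_congr_ae (Eventually.of_forall (fun ω => mul_comm _ _))]
        exact horth _ _ h
    rw [this, mul_zero]
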